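/- With R = k (θ ∧ (θ∘J)) ⊗ (θ ∧ (θ∘J)) as above and ξ null, the associated Ricci tensor vanishes: for any basis, the trace r(Y, W) = Σᵢ εᵢ R(eᵢ, Y, eᵢ, W) over an orthonormal basis {eᵢ} equals 0. -/

import Mathlib

/-- With `R = k (θ ∧ (θ∘J)) ⊗ (θ ∧ (θ∘J))`, `θ = ξ♭`, `ξ` null (and
`Jξ` null, `g(ξ,Jξ) = 0`), the Ricci contraction
`r(Y,W) = Σᵢ εᵢ R(eᵢ, Y, eᵢ, W)` over any orthonormal basis `{eᵢ}` vanishes. -/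
theorem stmt10 (V : Type*) [AddCommGroup V] [Module ℝ V] [FiniteDimensional ℝ V]
    (ε : ℝ) (hε : ε = 1 ∨ ε = -1)
    (g : LinearMap.BilinForm ℝ V)
    (hsymm : ∀ x y : V, g x y = g y x)
    (hnd : ∀ x : V, (∀ y : V, g x y = 0) → x = 0)
    (J : V →ₗ[ℝ] V) (hJ2 : ∀ x : V, J (J x) = ε • x)
    (hskew : ∀ x y : V, g (J x) y + g x (J y) = 0)
    (ξ : V) (h1 : g ξ ξ = 0) (h2 : g (J ξ) (J ξ) = 0) (h3 : g ξ (J ξ) = 0)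
    (k : ℝ)
    (θ : V → ℝ) (hθ : ∀ X : V, θ X = g ξ X)
    (w : V → V → ℝ) (hw : ∀ X Y : V, w X Y = θ X * θ (J Y) - θ Y * θ (J X))
    (R : V → V → V → V → ℝ)
    (hR : ∀ X Y Z W : V, R X Y Z W = k * w X Y * w Z W)
    (m : ℕ) (e : Module.Basis (Fin m) ℝ V) (s : Fin m → ℝ)
    (hs : ∀ i, s i = 1 ∨ s i = -1)
    (horth : ∀ i j, g (e i) (e j) = if i = j then s i else 0) :
    ∀ Y W : V, ∑ i, s i * R (e i) Y (e i) W = 0 := by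

  intro Y W
  have hs2 : ∀ i, s i * s i = 1 := by
    intro i; rcases hs i with h | h <;> rw [h] <;> norm_num
  have key : ∀ u v : V, ∑ i, s i * (g u (e i) * g v (e i)) = g u v := by
    intro u v
    have hv : ∑ j, e.repr v j • e j = v := Module.Basis.sum_repr e v
    have hvi : ∀ i, g v (e i) = e.repr v i * s i := by
      intro i
      conv_lhs => rw [← hv]
      rw [map_sum, LinearMap.sum_apply]
      have : ∀ j, ((g (e.repr v j • e j)) (e i) : ℝ)
          = if j = i then e.repr v i * s i else 0 := by
        intro j
        rw [map_smul, LinearMap.smul_apply, smul_eq_mul, horth]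
        by_cases h : j = i <;> simp [h]
      rw [Finset.sum_congr rfl (fun j _ => this j), Finset.sum_ite_eq' ]
      simp
    have hgu : g u v = ∑ i, e.repr v i * g u (e i) := by
      conv_lhs => rw [← hv]
      rw [map_sum]
      exact Finset.sum_congr rfl (fun i _ => by rw [map_smul, smul_eq_mul])
    rw [hgu]
    refine Finset.sum_congr rfl (fun i _ => ?_)
    rw [hvi i]
    linear_combination (g u (e i) * e.repr v i) * hs2 i
  have e1 : ∑ i, s i * (g ξ (e i) * g ξ (e i)) = 0 := by rw [key]; exact h1
  have e2 : ∑ i, s i * (g ξ (e i) * g (J ξ) (e i)) = 0 := by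
    rw [key]; exact h3
  have e3 : ∑ i, s i * (g (J ξ) (e i) * g (J ξ) (e i)) = 0 := by rw [key]; exact h2
  have hsk : ∀ x : V, g ξ (J x) = - g (J ξ) x := by
    intro x; have := hskew ξ x; linarith
  have step : ∀ i, s i * R (e i) Y (e i) W
      = (k * θ (J Y) * θ (J W)) * (s i * (g ξ (e i) * g ξ (e i)))
      + (k * (θ (J Y) * θ W + θ Y * θ (J W))) * (s i * (g ξ (e i) * g (J ξ) (e i)))
      + (k * θ Y * θ W) * (s i * (g (J ξ) (e i) * g (J ξ) (e i))) := by
    intro i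
    rw [hR, hw, hw, hθ (e i), hθ (J (e i)), hsk (e i)]
    ring
  rw [Finset.sum_congr rfl (fun i _ => step i)]
  rw [Finset.sum_add_distrib, Finset.sum_add_distrib, ← Finset.mul_sum,
    ← Finset.mul_sum, ← Finset.mul_sum, e1, e2, e3]
  ring
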